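/- Let G be a graph, P = x_0, x_1, ..., x_m a maximal path in G with endpoint x = x_0, and S the set of endpoints (other than x) of paths spanning V(P) obtainable from P by rotations with x fixed. Then for every vertex x_i adjacent to some vertex of S (with x_i ∉ S), at least one of x_{i−1}, x_{i+1} belongs to S (Pósa's lemma). -/

import Mathlib

/-- One Pósa rotation with the first endpoint fixed: if `p = x_0 … x_j x_{j+1} … x_m`
with `j < m - 1` and `{x_j, x_m} ∈ E(G)`, the rotated path is
`x_0 … x_j x_m x_{m-1} … x_{j+1}`. Here `A ++ [a] = x_0 … x_j` and
`B ++ [b] = x_{j+1} … x_m`, with `B ≠ []` ensuring `j < m - 1`. -/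
def PosaRotate {V : Type*} (G : SimpleGraph V) (p q : List V) : Prop :=
  ∃ (A B : List V) (a b : V), B ≠ [] ∧ G.Adj a b ∧
    p = (A ++ [a]) ++ (B ++ [b]) ∧ q = (A ++ [a]) ++ (B ++ [b]).reverse

private def lE {V : Type*} : List V → List (Sym2 V)
  | a :: b :: r => s(a, b) :: lE (b :: r)
  | _ => []

private lemma mem_lE {V : Type*} {e : Sym2 V} : ∀ {l : List V},
    e ∈ lE l ↔ ∃ u w L R, l = L ++ u :: w :: R ∧ e = s(u, w) := by
  intro l
  induction l with
  | nil =>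
    simp only [lE, List.not_mem_nil, false_iff]
    rintro ⟨u, w, L, R, h, -⟩
    apply_fun List.length at h
    simp at h
  | cons a t ih =>
    cases t with
    | nil =>
      simp only [lE, List.not_mem_nil, false_iff]
      rintro ⟨u, w, L, R, h, -⟩
      apply_fun List.length at h
      simp at h
      omega
    | cons b r =>
      constructor
      · intro h
        rcases (by simpa [lE] using h : e = s(a, b) ∨ e ∈ lE (b :: r)) with h | h
        · exact ⟨a, b, [], r, rfl, h⟩
        · obtain ⟨u, w, L, R, hl, he⟩ := ih.mp h
          exact ⟨u, w, a :: L, R, by rw [List.cons_append, ← hl], he⟩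
      · rintro ⟨u, w, L, R, hl, he⟩
        cases L with
        | nil =>
          simp only [List.nil_append, List.cons.injEq] at hl
          obtain ⟨rfl, rfl, rfl⟩ := hl
          simp [lE, he]
        | cons c L' =>
          simp only [List.cons_append, List.cons.injEq] at hl
          obtain ⟨rfl, hl⟩ := hl
          have : e ∈ lE (b :: r) := ih.mpr ⟨u, w, L', R, hl, he⟩
          simp [lE, this]

private lemma lE_append {V : Type*} : ∀ (l l' : List V) (h : l ≠ []) (h' : l' ≠ []),
    lE (l ++ l') = lE l ++ s(l.getLast h, l'.head h') :: lE l' := by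
  intro l
  induction l with
  | nil => simp
  | cons a t ih =>
    intro l' h h'
    cases t with
    | nil =>
      cases l' with
      | nil => simp at h'
      | cons c r => simp [lE]
    | cons d t' =>
      have := ih l' (by simp) h'
      simp only [List.cons_append] at this ⊢
      rw [show lE (a :: d :: (t' ++ l')) = s(a, d) :: lE (d :: (t' ++ l')) from rfl, this]
      simp [lE, List.getLast]

private lemma mem_lE_rev_aux {V : Type*} {e : Sym2 V} {l : List V}
    (h : e ∈ lE l.reverse) : e ∈ lE l := by
  rw [mem_lE] at h ⊢
  obtain ⟨u, w, L, R, hl, he⟩ := h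
  refine ⟨w, u, R.reverse, L.reverse, ?_, by rw [he, Sym2.eq_swap]⟩
  have := congrArg List.reverse hl
  simpa using this

private lemma mem_lE_reverse {V : Type*} {e : Sym2 V} {l : List V} :
    e ∈ lE l.reverse ↔ e ∈ lE l :=
  ⟨mem_lE_rev_aux, fun h => mem_lE_rev_aux (l := l.reverse) (by simpa using h)⟩

private lemma getLast?_app {V : Type*} (l m : List V) (h : m ≠ []) :
    (l ++ m).getLast? = m.getLast? := by
  rw [List.getLast?_append]
  cases m with
  | nil => simp at h
  | cons a t => simp [List.getLast?]

theorem stmt_6 {V : Type*} [Fintype V] [DecidableEq V] (G : SimpleGraph V)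
    (p : List V) (hne : p ≠ []) (hchain : p.Chain' G.Adj) (hnodup : p.Nodup)
    (x : V) (hx : p.head hne = x)
    (hmax₁ : ∀ y, G.Adj x y → y ∈ p)
    (hmax₂ : ∀ y, G.Adj (p.getLast hne) y → y ∈ p)
    (S : Set V)
    (hS : S = {y | ∃ q, Relation.ReflTransGen (PosaRotate G) p q ∧
      q.getLast? = some y ∧ y ≠ x}) :
    ∀ (i : ℕ) (hi : i < p.length),
      (∃ s ∈ S, G.Adj (p.get ⟨i, hi⟩) s) → p.get ⟨i, hi⟩ ∉ S →
      ((∃ _ : 1 ≤ i, p.get ⟨i - 1, by omega⟩ ∈ S) ∨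
       (∃ h : i + 1 < p.length, p.get ⟨i + 1, h⟩ ∈ S)) := by
  intro i hi hadjS hvS
  by_contra hcon
  push_neg at hcon
  obtain ⟨h1, h2⟩ := hcon
  obtain ⟨s, hsS, hadj⟩ := hadjS
  set v := p.get ⟨i, hi⟩ with hv
  have hSmem : ∀ y : V, (∃ q, Relation.ReflTransGen (PosaRotate G) p q ∧
      q.getLast? = some y ∧ y ≠ x) → y ∈ S := by
    intro y hy; rw [hS]; exact hy
  -- p-neighbors of v are not in S
  have hpnbr : ∀ w, s(v, w) ∈ lE p → w ∉ S := by
    intro w hw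
    rw [mem_lE] at hw
    obtain ⟨u, w', L, R, hdec, he⟩ := hw
    rcases Sym2.eq_iff.mp he with ⟨hu, hw'⟩ | ⟨hu, hw'⟩
    · subst hu; subst hw'
      -- p = L ++ v :: w :: R
      have hL1 : L.length < p.length := by
        rw [hdec, List.length_append, List.length_cons, List.length_cons]; omega
      have hgv : p.get ⟨L.length, hL1⟩ = v := by
        simp only [List.get_eq_getElem, hdec]
        rw [List.getElem_append_right le_rfl]
        simp
      have hiL : L.length = i := by
        have := hnodup.get_inj_iff.mp (hgv.trans hv)
        simpa using this
      have hi1 : i + 1 < p.length := by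
        rw [hdec, List.length_append, List.length_cons, List.length_cons]; omega
      have hgw : p.get ⟨i + 1, hi1⟩ = w := by
        simp only [List.get_eq_getElem, hdec]
        rw [List.getElem_append_right (by omega)]
        simp [← hiL]
      exact fun hwS => h2 hi1 (by rwa [hgw])
    · subst hu; subst hw'
      -- p = L ++ w :: v :: R
      have hL1 : L.length + 1 < p.length := by
        rw [hdec, List.length_append, List.length_cons, List.length_cons]; omega
      have hgv : p.get ⟨L.length + 1, hL1⟩ = v := by
        simp only [List.get_eq_getElem, hdec]
        rw [List.getElem_append_right (by omega)]
        simp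
      have hiL : L.length + 1 = i := by
        have := hnodup.get_inj_iff.mp (hgv.trans hv)
        simpa using this
      have h1i : 1 ≤ i := by omega
      have hi1 : i - 1 < p.length := by omega
      have hLp : L.length < p.length := by omega
      have hgw : p.get ⟨i - 1, hi1⟩ = w := by
        have heq : p.get ⟨i - 1, hi1⟩ = p.get ⟨L.length, hLp⟩ := by
          congr 1
          exact Fin.mk_eq_mk.mpr (by omega)
        rw [heq]
        simp only [List.get_eq_getElem, hdec]
        rw [List.getElem_append_right le_rfl]
        simp
      exact fun hwS => h1 h1i (by rwa [hgw])
  have hxhead : p.head? = some x := by rw [← hx]; exact List.head?_eq_head hne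
  have key : ∀ q, Relation.ReflTransGen (PosaRotate G) p q →
      q.Perm p ∧ q.head? = some x ∧ ∀ w, s(v, w) ∈ lE q → w ∉ S := by
    intro q hq
    induction hq with
    | refl => exact ⟨List.Perm.refl p, hxhead, hpnbr⟩
    | @tail q' q'' hpq step ih =>
      obtain ⟨A, B, a, z, hB, haz, hdq', hdq''⟩ := step
      obtain ⟨b0, B', rfl⟩ : ∃ b0 B', B = b0 :: B' := by
        cases B with
        | nil => exact absurd rfl hB
        | cons b0 B' => exact ⟨b0, B', rfl⟩
      obtain ⟨ihperm, ihhead, ihnbr⟩ := ih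
      have hAa : (A ++ [a] : List V) ≠ [] := by simp
      have hq'nd : q'.Nodup := ihperm.nodup_iff.mpr hnodup
      have hdisj : (A ++ [a] : List V).Disjoint ((b0 :: B') ++ [z]) := by
        rw [hdq'] at hq'nd
        exact List.disjoint_of_nodup_append hq'nd
      have hxA : x ∈ A ++ [a] := by
        have h' : q'.head? = (A ++ [a]).head? := by
          rw [hdq', List.head?_append_of_ne_nil _ hAa]
        rw [ihhead, List.head?_eq_head hAa] at h'
        rw [Option.some.inj h']
        exact List.head_mem hAa
      have hlastq' : q'.getLast? = some z := by
        rw [hdq', getLast?_app _ _ (by simp)]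
        exact List.getLast?_concat
      have hzx : z ≠ x := by
        intro h; subst h; exact hdisj hxA (by simp)
      have hzS : z ∈ S := hSmem z ⟨q', hpq, hlastq', hzx⟩
      have hreach'' : Relation.ReflTransGen (PosaRotate G) p q'' :=
        hpq.tail ⟨A, b0 :: B', a, z, hB, haz, hdq', hdq''⟩
      have hlastq'' : q''.getLast? = some b0 := by
        rw [hdq'', getLast?_app _ _ (by simp), List.getLast?_reverse]
        rfl
      have hb0x : b0 ≠ x := by
        intro h; subst h; exact hdisj hxA (by simp)
      have hb0S : b0 ∈ S := hSmem b0 ⟨q'', hreach'', hlastq'', hb0x⟩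
      have hedgeq' : s(a, b0) ∈ lE q' := by
        rw [mem_lE]
        exact ⟨a, b0, A, B' ++ [z], by rw [hdq']; simp, rfl⟩
      have hva : v ≠ a := fun h => ihnbr b0 (by rw [h]; exact hedgeq') hb0S
      have hvz : v ≠ z := fun h => hvS (by rw [h]; exact hzS)
      have hvb0 : v ≠ b0 := fun h => hvS (by rw [h]; exact hb0S)
      have hperm'' : q''.Perm p := by
        have hqq : q''.Perm q' := by
          rw [hdq'', hdq']
          exact List.Perm.append_left _ (List.reverse_perm _)
        exact hqq.trans ihperm
      have hhead'' : q''.head? = some x := by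
        rw [hdq'', List.head?_append_of_ne_nil _ hAa]
        rw [hdq', List.head?_append_of_ne_nil _ hAa] at ihhead
        exact ihhead
      refine ⟨hperm'', hhead'', ?_⟩
      intro w hw
      have hrevne : (((b0 :: B') ++ [z]).reverse : List V) ≠ [] := by simp
      have hgl : (A ++ [a]).getLast hAa = a := List.getLast_concat
      rw [hdq'', lE_append (A ++ [a]) _ hAa hrevne, List.mem_append, List.mem_cons] at hw
      apply ihnbr w
      rw [hdq', lE_append (A ++ [a]) _ hAa (by simp), List.mem_append, List.mem_cons]
      rcases hw with h | h | h
      · exact Or.inl h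
      · exfalso
        have hhr : ((b0 :: B') ++ [z]).reverse.head hrevne = z := by
          rw [List.head_reverse]
          exact List.getLast_concat
        rw [hgl, hhr] at h
        rcases Sym2.eq_iff.mp h with ⟨h', -⟩ | ⟨h', -⟩
        · exact hva h'
        · exact hvz h'
      · exact Or.inr (Or.inr (mem_lE_rev_aux h))
  obtain ⟨q, hq, hqlast, hsx⟩ : ∃ q, Relation.ReflTransGen (PosaRotate G) p q ∧
      q.getLast? = some s ∧ s ≠ x := by rw [hS] at hsS; exact hsS
  obtain ⟨hperm, hhead, hnbr⟩ := key q hq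
  have hvp : v ∈ p := p.get_mem _
  have hvq : v ∈ q := hperm.mem_iff.mpr hvp
  have hvs : v ≠ s := fun h => hvS (by rw [h]; exact hsS)
  obtain ⟨C, D, hCD⟩ := List.append_of_mem hvq
  have hD : D ≠ [] := by
    rintro rfl
    rw [hCD, getLast?_app _ _ (by simp)] at hqlast
    simp at hqlast
    exact hvs hqlast
  obtain ⟨E, d, hE⟩ : ∃ E d, D = E ++ [d] := by
    rcases D.eq_nil_or_concat with h | ⟨E, d, h⟩
    · exact absurd h hD
    · exact ⟨E, d, by simpa using h⟩
  have hds : d = s := by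
    rw [hCD, hE, getLast?_app _ _ (by simp)] at hqlast
    have : (v :: (E ++ [d])).getLast? = some d := List.getLast?_concat (l := v :: E)
    rw [this] at hqlast
    exact Option.some.inj hqlast
  subst hds
  cases E with
  | nil =>
    have : s(v, d) ∈ lE q := mem_lE.mpr ⟨v , d, C, [], by rw [hCD, hE]; rfl, rfl⟩
    exact hnbr d this hsS
  | cons w E' =>
    have hrot : PosaRotate G q ((C ++ [v]) ++ ((w :: E') ++ [d]).reverse) :=
      ⟨C, w :: E', v , d, by simp, hadj, by rw [hCD, hE]; simp, rfl⟩
    have hreach := hq.tail hrot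
    have hlastr : ((C ++ [v]) ++ ((w :: E') ++ [d]).reverse).getLast? = some w := by
      rw [getLast?_app _ _ (by simp), List.getLast?_reverse]
      rfl
    have hqnd : q.Nodup := hperm.nodup_iff.mpr hnodup
    have hwx : w ≠ x := by
      rw [hCD, hE] at hqnd hhead
    -- q = C ++ v :: w :: E' ++ [d]
      cases C with
      | nil =>
        simp only [List.nil_append, List.head?_cons, Option.some.injEq] at hhead
        simp only [List.nil_append] at hqnd
        rw [List.nodup_cons] at hqnd
        intro h
        exact hqnd.1 (by simp [show v = w by rw [hhead, ← h]])
      | cons c C' =>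
        simp only [List.cons_append, List.head?_cons, Option.some.injEq] at hhead
        have hdisj2 : (c :: C').Disjoint (v :: ((w :: E') ++ [d])) :=
          List.disjoint_of_nodup_append hqnd
        intro h
        exact hdisj2 (List.mem_cons.mpr (Or.inl hhead.symm)) (by simp [h])
    have hwS : w ∈ S := hSmem w ⟨_, hreach, hlastr, hwx⟩
    have : s(v, w) ∈ lE q := mem_lE.mpr ⟨v, w, C, E' ++ [d], by rw [hCD, hE]; simp, rfl⟩
    exact hnbr w this hwS
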